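/- In a uniform level-L refinement of the type-0 root triangle, each level-L subtriangle of type 1 is a face-neighbor of a level-L subtriangle of type 0 that comes strictly later in the TM order. -/

import Mathlib

/-- Points of the plane. -/
abbrev TMV : Type := Fin 2 → ℝ

/-- Midpoint of two points of the plane. -/
noncomputable def tmMid (a b : TMV) : TMV := (1 / 2 : ℝ) • (a + b)

/-- Bey's refinement: the four children of a triangle `[x 0, x 1, x 2]`. -/
noncomputable def beyChild (x : Fin 3 → TMV) : Fin 4 → Fin 3 → TMV :=
  ![![x 0, tmMid (x 0) (x 1), tmMid (x 0) (x 2)],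
    ![tmMid (x 0) (x 1), x 1, tmMid (x 1) (x 2)],
    ![tmMid (x 0) (x 2), tmMid (x 1) (x 2), x 2],
    ![tmMid (x 0) (x 1), tmMid (x 0) (x 2), tmMid (x 1) (x 2)]]

/-- The vertices of the subtriangle of the root `x` reached by the successive
child choices recorded in the list `p`. -/
noncomputable def tmVerts (x : Fin 3 → TMV) : List (Fin 4) → Fin 3 → TMV
  | [] => x
  | i :: p => tmVerts (beyChild x i) p

/-- The type of the subtriangle reached by path `p` from a root of type `τ`:
children `T_0, T_1, T_2` inherit the parent's type, `T_3` has the opposite type. -/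
def tmType (τ : Fin 2) : List (Fin 4) → Fin 2
  | [] => τ
  | i :: p => tmType (if i = 3 then 1 - τ else τ) p

/-- The position of Bey child `i` in the TM traversal order of the children of a
parent of type `b`: order `T_0, T_1, T_3, T_2` for type 0 and `T_0, T_3, T_1, T_2`
for type 1. -/
def tmChildRank (b : Fin 2) : Fin 4 → Fin 4 :=
  if b = 0 then ![0, 1, 3, 2] else ![0, 2, 3, 1]

/-- The TM index of the level-`p.length` subtriangle given by path `p` from a root
of type `τ`, among all subtriangles of that level. -/
def tmIndex (τ : Fin 2) : List (Fin 4) → ℕ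
  | [] => 0
  | i :: p => (tmChildRank τ i : ℕ) * 4 ^ p.length + tmIndex (if i = 3 then 1 - τ else τ) p

/-- The closed triangle spanned by the three vertices. -/
def triSet (x : Fin 3 → TMV) : Set TMV := convexHull ℝ {x 0, x 1, x 2}

/-- `e` is a complete edge of the triangle with vertices `x`. -/
def triIsEdge (x : Fin 3 → TMV) (e : Set TMV) : Prop :=
  ∃ i j : Fin 3, i ≠ j ∧ e = segment ℝ (x i) (x j)

/-- Two triangles are face-neighbors if their intersection is a complete edge of both. -/
def triFaceNbr (x y : Fin 3 → TMV) : Prop :=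
  ∃ e, triIsEdge x e ∧ triIsEdge y e ∧ triSet x ∩ triSet y = e

/-- A set `S` of subtriangle paths (with root vertices `x0`) is face-connected. -/
def triFaceConnected (x0 : Fin 3 → TMV) (S : Set (List (Fin 4))) : Prop :=
  ∀ p ∈ S, ∀ q ∈ S,
    Relation.ReflTransGen
      (fun a b => a ∈ S ∧ b ∈ S ∧ triFaceNbr (tmVerts x0 a) (tmVerts x0 b)) p q

/-- `S` has at most `n` face-connected components. -/
def triCompBound (x0 : Fin 3 → TMV) (S : Set (List (Fin 4))) (n : ℕ) : Prop :=
  ∃ f : Fin n → Set (List (Fin 4)), S = ⋃ i, f i ∧ ∀ i, triFaceConnected x0 (f i)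

/-- `S` is a contiguous segment of the TM curve through the uniform level-`L`
refinement of a root of type `τ`: a set of level-`L` paths forming an interval
in the TM order. -/
def tmSegment (τ : Fin 2) (L : ℕ) (S : Set (List (Fin 4))) : Prop :=
  (∀ p ∈ S, p.length = L) ∧
  ∀ p q r : List (Fin 4), p.length = L → q.length = L → r.length = L →
    p ∈ S → r ∈ S → tmIndex τ p ≤ tmIndex τ q → tmIndex τ q ≤ tmIndex τ r → q ∈ S

open Fin.NatCast

section Aux

lemma fin2_cases (a : Fin 2) : a = 0 ∨ a = 1 := by omega

lemma fin4_cases (a : Fin 4) : a = 0 ∨ a = 1 ∨ a = 2 ∨ a = 3 := by omega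

def det3 (x : Fin 3 → TMV) : ℝ :=
  (x 1 0 - x 0 0) * (x 2 1 - x 0 1) - (x 2 0 - x 0 0) * (x 1 1 - x 0 1)

def Adj (X Y : Fin 3 → TMV) : Prop :=
  Y 0 = X 1 ∧ Y 1 = X 2 ∧ X 1 ≠ X 2 ∧
    ∃ f : TMV →ᵃ[ℝ] ℝ, f (X 1) = 0 ∧ f (X 2) = 0 ∧ f (X 0) < 0 ∧ 0 < f (Y 2)

lemma adj_triFaceNbr {X Y : Fin 3 → TMV} (h : Adj X Y) : triFaceNbr X Y := by
  obtain ⟨h0, h1, hne, f, f1, f2, f0, fy⟩ := h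
  refine ⟨segment ℝ (X 1) (X 2), ⟨1, 2, by decide, rfl⟩, ⟨0, 1, by decide, by rw [h0, h1]⟩, ?_⟩
  apply Set.Subset.antisymm
  · rintro z ⟨hzX, hzY⟩
    have hXle : triSet X ⊆ {w | f w ≤ 0} := by
      apply convexHull_min
      · rintro w (rfl | rfl | rfl)
        · exact le_of_lt f0
        · exact le_of_eq f1
        · exact le_of_eq f2
      · exact (convex_Iic (0:ℝ)).affine_preimage f
    have hYge : triSet Y ⊆ {w | 0 ≤ f w} := by
      apply convexHull_min
      · rintro w (rfl | rfl | rfl)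
        · rw [h0]; exact le_of_eq f1.symm
        · rw [h1]; exact le_of_eq f2.symm
        · exact le_of_lt fy
      · exact (convex_Ici (0:ℝ)).affine_preimage f
    have hz0 : f z = 0 := le_antisymm (hXle hzX) (hYge hzY)
    have : z ∈ convexHull ℝ (insert (X 0) {X 1, X 2}) := hzX
    rw [convexHull_insert ⟨X 1, Set.mem_insert _ _⟩, mem_convexJoin] at this
    obtain ⟨a, ha, w, hw, hseg⟩ := this
    rw [Set.mem_singleton_iff] at ha
    subst ha
    rw [convexHull_pair] at hw
    have hfw : f w = 0 := by
      obtain ⟨c, d, hc, hd, hcd, rfl⟩ := hw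
      rw [Convex.combo_affine_apply hcd, f1, f2]
      simp
    obtain ⟨c, d, hc, hd, hcd, rfl⟩ := hseg
    have hfz : c • f (X 0) + d • f w = 0 := by
      rw [← Convex.combo_affine_apply hcd, hz0]
    have hc0 : c = 0 := by
      rw [hfw] at hfz
      simp only [smul_eq_mul, mul_zero, add_zero] at hfz
      rcases mul_eq_zero.mp hfz with h | h
      · exact h
      · exact absurd h (ne_of_lt f0)
    have hd1 : d = 1 := by rw [hc0] at hcd; linarith
    rw [hc0, hd1]
    simpa using hw
  · intro z hz
    constructor
    · rw [← convexHull_pair (𝕜 := ℝ) (X 1) (X 2)] at hz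
      refine convexHull_mono ?_ hz
      rintro w (rfl | hw)
      · right; left; rfl
      · rcases hw with rfl; right; right; rfl
    · have he : segment ℝ (X 1) (X 2) = segment ℝ (Y 0) (Y 1) := by rw [h0, h1]
      rw [he, ← convexHull_pair (𝕜 := ℝ) (Y 0) (Y 1)] at hz
      refine convexHull_mono ?_ hz
      rintro w (rfl | hw)
      · left; rfl
      · rcases hw with rfl; right; left; rfl


lemma tmMid_apply (a b : TMV) (j : Fin 2) : tmMid a b j = (a j + b j) / 2 := by
  simp [tmMid]; ring

noncomputable def affF (a b c : ℝ) : TMV →ᵃ[ℝ] ℝ where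
  toFun x := a * x 0 + b * x 1 + c
  linear := a • (LinearMap.proj 0 : TMV →ₗ[ℝ] ℝ) + b • (LinearMap.proj 1 : TMV →ₗ[ℝ] ℝ)
  map_vadd' p v := by
    simp [LinearMap.proj, Pi.add_apply]
    ring

lemma affF_apply (a b c : ℝ) (x : TMV) : affF a b c x = a * x 0 + b * x 1 + c := rfl

lemma map_tmMid (f : TMV →ᵃ[ℝ] ℝ) (a b : TMV) : f (tmMid a b) = (f a + f b) / 2 := by
  have h : tmMid a b = AffineMap.lineMap a b (1/2 : ℝ) := by
    rw [AffineMap.lineMap_apply_module, tmMid]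
    module
  rw [h, AffineMap.apply_lineMap, AffineMap.lineMap_apply_module]
  simp
  ring

lemma tmMid_ne_left {a b : TMV} (h : a ≠ b) : a ≠ tmMid a b := by
  intro he
  apply h
  funext j
  have := congrFun he j
  rw [tmMid_apply] at this
  linarith

lemma tmMid_ne_right {a b : TMV} (h : a ≠ b) : tmMid a b ≠ b := by
  intro he
  apply h
  funext j
  have := congrFun he j
  rw [tmMid_apply] at this
  linarith

-- propagation steps
lemma adj_step1 {X Y : Fin 3 → TMV} (h : Adj X Y) : Adj (beyChild X 1) (beyChild Y 0) := by
  obtain ⟨h0, h1, hne, f, f1, f2, f0, fy⟩ := h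
  refine ⟨?_, ?_, ?_, f, ?_, ?_, ?_, ?_⟩
  · show Y 0 = X 1; exact h0
  · show tmMid (Y 0) (Y 1) = tmMid (X 1) (X 2); rw [h0, h1]
  · show X 1 ≠ tmMid (X 1) (X 2); exact tmMid_ne_left hne
  · show f (X 1) = 0; exact f1
  · show f (tmMid (X 1) (X 2)) = 0; rw [map_tmMid, f1, f2]; ring
  · show f (tmMid (X 0) (X 1)) < 0; rw [map_tmMid, f1]; linarith
  · show 0 < f (tmMid (Y 0) (Y 2)); rw [map_tmMid, h0, f1]; linarith

lemma adj_step2 {X Y : Fin 3 → TMV} (h : Adj X Y) : Adj (beyChild X 2) (beyChild Y 1) := by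
  obtain ⟨h0, h1, hne, f, f1, f2, f0, fy⟩ := h
  refine ⟨?_, ?_, ?_, f, ?_, ?_, ?_, ?_⟩
  · show tmMid (Y 0) (Y 1) = tmMid (X 1) (X 2); rw [h0, h1]
  · show Y 1 = X 2; exact h1
  · show tmMid (X 1) (X 2) ≠ X 2; exact tmMid_ne_right hne
  · show f (tmMid (X 1) (X 2)) = 0; rw [map_tmMid, f1, f2]; ring
  · show f (X 2) = 0; exact f2
  · show f (tmMid (X 0) (X 2)) < 0; rw [map_tmMid, f2]; linarith
  · show 0 < f (tmMid (Y 1) (Y 2)); rw [map_tmMid, h1, f2]; linarith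


lemma sign_adjust (f : TMV →ᵃ[ℝ] ℝ) (e1 e2 p q : TMV) (s : ℝ) (hs : s ≠ 0)
    (h1 : f e1 = 0) (h2 : f e2 = 0) (hp : f p = s) (hq : f q = -s) :
    ∃ g : TMV →ᵃ[ℝ] ℝ, g e1 = 0 ∧ g e2 = 0 ∧ g p < 0 ∧ 0 < g q := by
  rcases hs.lt_or_gt with h | h
  · exact ⟨f, h1, h2, by rw [hp]; linarith, by rw [hq]; linarith⟩
  · refine ⟨-f, ?_, ?_, ?_, ?_⟩ <;> simp [h1, h2, hp, hq] <;> linarith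

lemma adj_base03 {z : Fin 3 → TMV} (hz : det3 z ≠ 0) : Adj (beyChild z 0) (beyChild z 3) := by
  refine ⟨rfl, rfl, ?_, ?_⟩
  · show tmMid (z 0) (z 1) ≠ tmMid (z 0) (z 2)
    intro he
    have e0 := congrFun he 0
    have e1 := congrFun he 1
    rw [tmMid_apply, tmMid_apply] at e0 e1
    apply hz
    rw [det3, show z 1 0 = z 2 0 by linarith, show z 1 1 = z 2 1 by linarith]
    ring
  · set Δ := det3 z with hΔ
    have hs : Δ / 2 ≠ 0 := by simp [hΔ]; exact hz
    have := sign_adjust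
      (affF (z 1 1 - z 2 1) (z 2 0 - z 1 0) (z 1 0 * z 2 1 - z 2 0 * z 1 1 - Δ/2))
      (tmMid (z 0) (z 1)) (tmMid (z 0) (z 2)) (z 0) (tmMid (z 1) (z 2)) (Δ/2) hs
      (by rw [affF_apply, tmMid_apply, tmMid_apply]; simp only [hΔ, det3]; ring)
      (by rw [affF_apply, tmMid_apply, tmMid_apply]; simp only [hΔ, det3]; ring)
      (by rw [affF_apply]; simp only [hΔ, det3]; ring)
      (by rw [affF_apply, tmMid_apply, tmMid_apply]; simp only [hΔ, det3]; ring)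
    exact this

lemma adj_base32 {z : Fin 3 → TMV} (hz : det3 z ≠ 0) : Adj (beyChild z 3) (beyChild z 2) := by
  refine ⟨rfl, rfl, ?_, ?_⟩
  · show tmMid (z 0) (z 2) ≠ tmMid (z 1) (z 2)
    intro he
    have e0 := congrFun he 0
    have e1 := congrFun he 1
    rw [tmMid_apply, tmMid_apply] at e0 e1
    apply hz
    rw [det3, show z 1 0 = z 0 0 by linarith, show z 1 1 = z 0 1 by linarith]
    ring
  · set Δ := det3 z with hΔ
    have hs : -Δ / 2 ≠ 0 := by
      simp only [neg_div, ne_eq, neg_eq_zero, div_eq_zero_iff]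
      push_neg
      exact ⟨hz, by norm_num⟩
    have := sign_adjust
      (affF (-(z 1 1 - z 0 1)) (z 1 0 - z 0 0)
        (-(z 1 0 - z 0 0) * z 0 1 + z 0 0 * (z 1 1 - z 0 1) - Δ/2))
      (tmMid (z 0) (z 2)) (tmMid (z 1) (z 2)) (tmMid (z 0) (z 1)) (z 2) (-Δ/2) hs
      (by rw [affF_apply, tmMid_apply, tmMid_apply]; simp only [hΔ, det3]; ring)
      (by rw [affF_apply, tmMid_apply, tmMid_apply]; simp only [hΔ, det3]; ring)
      (by rw [affF_apply, tmMid_apply, tmMid_apply]; simp only [hΔ, det3]; ring)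
      (by rw [affF_apply]; simp only [hΔ, det3]; ring)
    exact this




lemma det3_beyChild (x : Fin 3 → TMV) (k : Fin 4) (hx : det3 x ≠ 0) :
    det3 (beyChild x k) ≠ 0 := by
  rcases fin4_cases k with rfl | rfl | rfl | rfl
  · have h : det3 (beyChild x 0) = det3 x / 4 := by simp [det3, beyChild, tmMid]; ring
    rw [h]; simpa using hx
  · have h : det3 (beyChild x 1) = det3 x / 4 := by simp [det3, beyChild, tmMid]; ring
    rw [h]; simpa using hx
  · have h : det3 (beyChild x 2) = det3 x / 4 := by simp [det3, beyChild, tmMid]; ring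
    rw [h]; simpa using hx
  · have h : det3 (beyChild x 3) = -(det3 x) / 4 := by simp [det3, beyChild, tmMid]; ring
    rw [h]
    simp only [ne_eq, div_eq_zero_iff, neg_eq_zero]
    push_neg
    exact ⟨hx, by norm_num⟩

lemma det3_tmVerts (r : List (Fin 4)) : ∀ x : Fin 3 → TMV, det3 x ≠ 0 →
    det3 (tmVerts x r) ≠ 0 := by
  induction r with
  | nil => intro x hx; exact hx
  | cons i r ih => intro x hx; exact ih _ (det3_beyChild x i hx)

lemma det3_ne_zero_of_affineIndependent {x : Fin 3 → TMV}
    (h : AffineIndependent ℝ x) : det3 x ≠ 0 := by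
  intro hdet
  rw [det3] at hdet
  rw [affineIndependent_iff] at h
  obtain ⟨a, b, hab, hcombo⟩ :
      ∃ a b : ℝ, (a ≠ 0 ∨ b ≠ 0) ∧
        a • (x 1 - x 0) + b • (x 2 - x 0) = 0 := by
    by_cases hA : x 1 0 = x 0 0 ∧ x 2 0 = x 0 0
    · by_cases hB : x 1 1 = x 0 1 ∧ x 2 1 = x 0 1
      · refine ⟨1, 0, Or.inl one_ne_zero, ?_⟩
        funext j
        simp only [Pi.add_apply, Pi.smul_apply, Pi.sub_apply, Pi.zero_apply, smul_eq_mul]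
        rcases fin2_cases j with rfl | rfl
        · linear_combination hA.1
        · linear_combination hB.1
      · refine ⟨x 2 1 - x 0 1, -(x 1 1 - x 0 1), ?_, ?_⟩
        · by_contra hc
          push_neg at hc
          exact hB ⟨by linarith [hc.2], by linarith [hc.1]⟩
        · funext j
          simp only [Pi.add_apply, Pi.smul_apply, Pi.sub_apply, Pi.zero_apply, smul_eq_mul]
          rcases fin2_cases j with rfl | rfl
          · linear_combination (x 2 1 - x 0 1) * hA.1 - (x 1 1 - x 0 1) * hA.2
          · ring
    · refine ⟨x 2 0 - x 0 0, -(x 1 0 - x 0 0), ?_, ?_⟩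
      · by_contra hc
        push_neg at hc
        exact hA ⟨by linarith [hc.2], by linarith [hc.1]⟩
      · funext j
        simp only [Pi.add_apply, Pi.smul_apply, Pi.sub_apply, Pi.zero_apply, smul_eq_mul]
        rcases fin2_cases j with rfl | rfl
        · ring
        · linear_combination -hdet
  set w : Fin 3 → ℝ := fun e => if e = 0 then -a - b else if e = 1 then a else b with hw
  have w0 : w 0 = -a - b := rfl
  have w1 : w 1 = a := rfl
  have w2 : w 2 = b := rfl
  have hsum : (Finset.univ : Finset (Fin 3)).sum w = 0 := by
    have hs3 : (Finset.univ : Finset (Fin 3)).sum w = w 0 + w 1 + w 2 := Fin.sum_univ_three w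
    rw [hs3, w0, w1, w2]; ring
  have hzero : ∑ e ∈ (Finset.univ : Finset (Fin 3)), w e • x e = 0 := by
    rw [Fin.sum_univ_three, w0, w1, w2]
    funext j
    have hj := congrFun hcombo j
    simp only [Pi.add_apply, Pi.smul_apply, Pi.sub_apply, Pi.zero_apply, smul_eq_mul] at hj ⊢
    linear_combination hj
  rcases hab with ha | hb
  · exact ha (w1 ▸ h Finset.univ w hsum hzero 1 (Finset.mem_univ _))
  · exact hb (w2 ▸ h Finset.univ w hsum hzero 2 (Finset.mem_univ _))

/-- relabeling of the trailing `{1,2}`-block -/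
def stepMap : Fin 4 → Fin 4 := fun j => if j = 1 then 0 else 1

lemma adj_walk (t : List (Fin 4)) (ht : ∀ j ∈ t, j = 1 ∨ j = 2) :
    ∀ X Y : Fin 3 → TMV, Adj X Y → Adj (tmVerts X t) (tmVerts Y (t.map stepMap)) := by
  induction t with
  | nil => intro X Y h; exact h
  | cons j t ih =>
    intro X Y h
    rcases ht j List.mem_cons_self with rfl | rfl
    · rw [List.map_cons, show stepMap 1 = 0 from rfl]
      exact ih (fun j hj => ht j (List.mem_cons_of_mem _ hj)) _ _ (adj_step1 h)
    · rw [List.map_cons, show stepMap 2 = 1 from rfl]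
      exact ih (fun j hj => ht j (List.mem_cons_of_mem _ hj)) _ _ (adj_step2 h)

lemma tmVerts_append (r s : List (Fin 4)) : ∀ x : Fin 3 → TMV,
    tmVerts x (r ++ s) = tmVerts (tmVerts x r) s := by
  induction r with
  | nil => intro x; rfl
  | cons i r ih => intro x; exact ih (beyChild x i)

lemma tmType_count (p : List (Fin 4)) : ∀ τ : Fin 2, tmType τ p = τ + (p.count 3 : Fin 2) := by
  induction p with
  | nil => intro τ; simp [tmType]
  | cons i p ih =>
    intro τ
    by_cases hi : i = 3
    · subst hi
      rw [tmType, if_pos rfl, ih, List.count_cons]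
      simp only [beq_self_eq_true, if_true]
      rw [Nat.cast_add, Nat.cast_one]
      rcases fin2_cases (((p.count 3 : ℕ)) : Fin 2) with h | h <;> rw [h] <;> revert τ <;> decide
    · rw [tmType, if_neg hi, ih, List.count_cons]
      have hbeq : (i == 3) = false := beq_eq_false_iff_ne.mpr hi
      rw [hbeq]
      simp

lemma tmIndex_lt_pow (p : List (Fin 4)) : ∀ τ, tmIndex τ p < 4 ^ p.length := by
  induction p with
  | nil => intro τ; simp [tmIndex]
  | cons i p ih =>
    intro τ
    have h2 := ih (if i = 3 then 1 - τ else τ)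
    have h3 : (tmChildRank τ i : ℕ) < 4 := (tmChildRank τ i).isLt
    have h4 : (tmChildRank τ i : ℕ) * 4 ^ p.length ≤ 3 * 4 ^ p.length :=
      Nat.mul_le_mul_right _ (by omega)
    show (tmChildRank τ i : ℕ) * 4 ^ p.length + tmIndex (if i = 3 then 1 - τ else τ) p
        < 4 ^ (i :: p).length
    rw [List.length_cons, pow_succ]
    linarith

lemma tmIndex_append (r : List (Fin 4)) : ∀ (τ : Fin 2) (s : List (Fin 4)),
    tmIndex τ (r ++ s) = tmIndex τ r * 4 ^ s.length + tmIndex (tmType τ r) s := by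
  induction r with
  | nil => intro τ s; simp [tmIndex, tmType]
  | cons i r ih =>
    intro τ s
    rw [List.cons_append]
    show (tmChildRank τ i : ℕ) * 4 ^ (r ++ s).length + tmIndex (if i = 3 then 1 - τ else τ) (r ++ s)
        = ((tmChildRank τ i : ℕ) * 4 ^ r.length + tmIndex (if i = 3 then 1 - τ else τ) r) * 4 ^ s.length
          + tmIndex (tmType τ (i :: r)) s
    rw [ih, List.length_append, pow_add, show tmType τ (i :: r) = tmType (if i = 3 then 1 - τ else τ) r from rfl]
    ring

lemma split_exists (p : List (Fin 4)) (h : ∃ j ∈ p, j = 0 ∨ j = 3) :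
    ∃ r i t, p = r ++ i :: t ∧ (i = 0 ∨ i = 3) ∧ ∀ j ∈ t, j = 1 ∨ j = 2 := by
  induction p with
  | nil => simp at h
  | cons a p ih =>
    by_cases hp : ∃ j ∈ p, j = 0 ∨ j = 3
    · obtain ⟨r, i, t, rfl, hi, ht⟩ := ih hp
      exact ⟨a :: r, i, t, rfl, hi, ht⟩
    · push_neg at hp
      have ha : a = 0 ∨ a = 3 := by
        obtain ⟨j, hj, hj03⟩ := h
        rcases List.mem_cons.mp hj with rfl | hjp
        · exact hj03
        · exact absurd hj03 (by simpa using hp j hjp)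
      refine ⟨[], a, p, rfl, ha, fun j hj => ?_⟩
      have hj03 := hp j hj
      rcases fin4_cases j with rfl | rfl | rfl | rfl <;> simp_all

lemma assemble (x0 : Fin 3 → TMV) (hx0 : AffineIndependent ℝ x0)
    (r t : List (Fin 4)) (ht : ∀ j ∈ t, j = 1 ∨ j = 2) (i i' : Fin 4)
    (hty : tmType 0 (r ++ i :: t) = 1)
    (hadj : Adj (beyChild (tmVerts x0 r) i) (beyChild (tmVerts x0 r) i'))
    (hrank : ∀ σ : Fin 2, (tmChildRank σ i : ℕ) < tmChildRank σ i')
    (hcnt : (((r ++ i' :: t.map stepMap).count 3 : ℕ) : Fin 2)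
        = (((r ++ i :: t).count 3 : ℕ) : Fin 2) + 1) :
    ∃ q : List (Fin 4), q.length = (r ++ i :: t).length ∧ tmType 0 q = 0 ∧
      tmIndex 0 (r ++ i :: t) < tmIndex 0 q ∧
      triFaceNbr (tmVerts x0 (r ++ i :: t)) (tmVerts x0 q) := by
  refine ⟨r ++ i' :: t.map stepMap, by simp, ?_, ?_, ?_⟩
  · have h1 := tmType_count (r ++ i :: t) 0
    rw [hty, zero_add] at h1
    have h2 := tmType_count (r ++ i' :: t.map stepMap) 0
    rw [h2, hcnt, ← h1, zero_add]
    decide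
  · rw [tmIndex_append, tmIndex_append]
    have hlen : (i' :: t.map stepMap).length = (i :: t).length := by simp
    rw [hlen]
    apply Nat.add_lt_add_left
    show (tmChildRank (tmType 0 r) i : ℕ) * 4 ^ t.length
          + tmIndex (if i = 3 then 1 - tmType 0 r else tmType 0 r) t
        < (tmChildRank (tmType 0 r) i' : ℕ) * 4 ^ (t.map stepMap).length
          + tmIndex (if i' = 3 then 1 - tmType 0 r else tmType 0 r) (t.map stepMap)
    rw [List.length_map]
    have hA : tmIndex (if i = 3 then 1 - tmType 0 r else tmType 0 r) t < 4 ^ t.length :=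
      tmIndex_lt_pow t _
    have hr := hrank (tmType 0 r)
    have h5 : ((tmChildRank (tmType 0 r) i : ℕ) + 1) * 4 ^ t.length
        ≤ (tmChildRank (tmType 0 r) i' : ℕ) * 4 ^ t.length :=
      Nat.mul_le_mul_right _ hr
    rw [Nat.add_mul, one_mul] at h5
    have h6 : 0 ≤ tmIndex (if i' = 3 then 1 - tmType 0 r else tmType 0 r) (t.map stepMap) :=
      Nat.zero_le _
    omega
  · rw [tmVerts_append, tmVerts_append]
    show triFaceNbr (tmVerts (beyChild (tmVerts x0 r) i) t)
      (tmVerts (beyChild (tmVerts x0 r) i') (t.map stepMap))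
    exact adj_triFaceNbr (adj_walk t ht _ _ hadj)

end Aux

/-- In a uniform level-`L` refinement of the type-0 root triangle, each level-`L`
subtriangle of type 1 is a face-neighbor of a level-`L` subtriangle of type 0 that
comes strictly later in the TM order. -/
theorem tm_type1_has_later_type0_neighbor (x0 : Fin 3 → TMV)
    (hx0 : AffineIndependent ℝ x0) (L : ℕ)
    (p : List (Fin 4)) (hp : p.length = L) (hty : tmType 0 p = 1) :
    ∃ q : List (Fin 4), q.length = L ∧ tmType 0 q = 0 ∧
      tmIndex 0 p < tmIndex 0 q ∧ triFaceNbr (tmVerts x0 p) (tmVerts x0 q) := by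
  subst hp
  have hcount : (((p.count 3 : ℕ)) : Fin 2) = 1 := by
    have h := tmType_count p 0
    rw [hty, zero_add] at h
    exact h.symm
  have hmem : (3 : Fin 4) ∈ p := by
    by_contra hm
    rw [List.count_eq_zero_of_not_mem hm] at hcount
    simp at hcount
  obtain ⟨r, i, t, rfl, hi, ht⟩ := split_exists p ⟨3, hmem, Or.inr rfl⟩
  have hz : det3 (tmVerts x0 r) ≠ 0 :=
    det3_tmVerts r x0 (det3_ne_zero_of_affineIndependent hx0)
  have hct : t.count 3 = 0 := by
    rw [List.count_eq_zero]
    intro hm3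
    rcases ht 3 hm3 with h | h <;> exact absurd h (by decide)
  have hct' : (t.map stepMap).count 3 = 0 := by
    rw [List.count_eq_zero]
    intro hm3
    obtain ⟨j, hj, hj3⟩ := List.mem_map.mp hm3
    rcases ht j hj with rfl | rfl <;> exact absurd hj3 (by decide)
  rcases hi with rfl | rfl
  · exact assemble x0 hx0 r t ht 0 3 hty (adj_base03 hz)
      (fun σ => by rcases fin2_cases σ with rfl | rfl <;> decide)
      (by rw [List.count_append, List.count_append, List.count_cons, List.count_cons,
            hct, hct']
          push_cast
          simp)
  · exact assemble x0 hx0 r t ht 3 2 hty (adj_base32 hz)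
      (fun σ => by rcases fin2_cases σ with rfl | rfl <;> decide)
      (by rw [List.count_append, List.count_append, List.count_cons, List.count_cons,
            hct, hct']
          push_cast
          have h11 : (1 + 1 : Fin 2) = 0 := rfl
          simp [add_assoc, h11])
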